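/- Let 1→2→⋯→m→1 be an m-vertex directed cycle (m ≥ 2) where each arc carries a real matrix C_i with n columns and full row rank, with K_i = kernel(C_i) and P_i = C_iᵀ(C_iC_iᵀ)^{−1}C_i. Suppose the weighted cycle is well-configured, i.e., the relations C_i(x_i − x_{i−1}) = 0 for all i imply x_1 = ⋯ = x_m (equivalently, the family {K_i : K_i ≠ {0}} is independent). Then for every initial state, the update x_i(t+1) = x_i(t) − (1/2) P_i (x_i(t) − x_{i−1}(t)), i ∈ {1,…,m} (indices mod m), leads all m agents to a consensus exponentially fast: there exist z ∈ ℝ^n, c ≥ 0 and ρ ∈ [0,1) such that ‖x_i(t) − z‖ ≤ c ρᵗ for all i and t. -/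

import Mathlib

open Matrix
open scoped RealInnerProductSpace

section Aux

variable {n kk : ℕ}

private lemma isUnit_det_CCT (C : Matrix (Fin kk) (Fin n) ℝ) (h : C.rank = kk) :
    IsUnit (C * Cᵀ).det := by
  have h1 : (C * Cᵀ).rank = kk := by rw [Matrix.rank_self_mul_transpose, h]
  have htop : LinearMap.range (C * Cᵀ).mulVecLin = ⊤ := by
    apply Submodule.eq_top_of_finrank_eq
    rw [Module.finrank_fin_fun]
    exact h1
  rw [← Matrix.isUnit_iff_isUnit_det, ← Matrix.mulVec_injective_iff_isUnit]
  have hsurj : Function.Surjective (C * Cᵀ).mulVecLin := LinearMap.range_eq_top.mp htop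
  exact (LinearMap.injective_iff_surjective (f := (C * Cᵀ).mulVecLin)).mpr hsurj

private lemma CP_eq (C : Matrix (Fin kk) (Fin n) ℝ) (h : C.rank = kk) :
    C * (Cᵀ * (C * Cᵀ)⁻¹ * C) = C := by
  have hu := isUnit_det_CCT C h
  rw [← Matrix.mul_assoc, ← Matrix.mul_assoc, Matrix.mul_nonsing_inv _ hu, Matrix.one_mul]

private lemma PT_eq (C : Matrix (Fin kk) (Fin n) ℝ) :
    (Cᵀ * (C * Cᵀ)⁻¹ * C)ᵀ = Cᵀ * (C * Cᵀ)⁻¹ * C := by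
  rw [Matrix.transpose_mul, Matrix.transpose_mul, Matrix.transpose_nonsing_inv,
    Matrix.transpose_mul, Matrix.transpose_transpose, Matrix.mul_assoc]

private lemma PP_eq (C : Matrix (Fin kk) (Fin n) ℝ) (h : C.rank = kk) :
    (Cᵀ * (C * Cᵀ)⁻¹ * C) * (Cᵀ * (C * Cᵀ)⁻¹ * C) = Cᵀ * (C * Cᵀ)⁻¹ * C := by
  rw [Matrix.mul_assoc (Cᵀ * (C * Cᵀ)⁻¹) C _, CP_eq C h]

private lemma ker_P_iff (C : Matrix (Fin kk) (Fin n) ℝ) (h : C.rank = kk) (y : Fin n → ℝ) :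
    (Cᵀ * (C * Cᵀ)⁻¹ * C).mulVec y = 0 ↔ C.mulVec y = 0 := by
  constructor
  · intro hy
    have h2 : C.mulVec ((Cᵀ * (C * Cᵀ)⁻¹ * C).mulVec y) = 0 := by rw [hy, Matrix.mulVec_zero]
    rwa [Matrix.mulVec_mulVec, CP_eq C h] at h2
  · intro hy
    rw [Matrix.mul_assoc, ← Matrix.mulVec_mulVec, ← Matrix.mulVec_mulVec, hy,
      Matrix.mulVec_zero, Matrix.mulVec_zero]

end Aux

private def toE {n : ℕ} (v : Fin n → ℝ) : EuclideanSpace ℝ (Fin n) := WithLp.toLp 2 v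

private def unE {n : ℕ} (v : EuclideanSpace ℝ (Fin n)) : Fin n → ℝ := v

private abbrev Hs (m n : ℕ) := PiLp 2 (fun _ : Fin m => EuclideanSpace ℝ (Fin n))

private def toH {m n : ℕ} (v : Fin m → Fin n → ℝ) : Hs m n := WithLp.toLp 2 (fun i => toE (v i))

section Aux2

variable {n : ℕ}

private lemma inner_toE (a b : Fin n → ℝ) : ⟪toE a, toE b⟫ = dotProduct a b := by
  simp [toE, PiLp.inner_apply, dotProduct, RCLike.inner_apply]
  exact Finset.sum_congr rfl fun _ _ => mul_comm _ _

private lemma inner_P_right (P : Matrix (Fin n) (Fin n) ℝ) (hPT : Pᵀ = P) (a b : Fin n → ℝ) :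
    ⟪toE a, toE (P *ᵥ b)⟫ = ⟪toE (P *ᵥ a), toE b⟫ := by
  rw [inner_toE, inner_toE, Matrix.dotProduct_mulVec, ← hPT, Matrix.vecMul_transpose, hPT]

private lemma inner_P_P (P : Matrix (Fin n) (Fin n) ℝ) (hPT : Pᵀ = P) (hPP : P * P = P)
    (a b : Fin n → ℝ) : ⟪toE (P *ᵥ a), toE (P *ᵥ b)⟫ = ⟪toE a, toE (P *ᵥ b)⟫ := by
  rw [← inner_P_right P hPT, Matrix.mulVec_mulVec, hPP]

private lemma norm_P_sq (P : Matrix (Fin n) (Fin n) ℝ) (hPT : Pᵀ = P) (hPP : P * P = P)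
    (a : Fin n → ℝ) : ‖toE (P *ᵥ a)‖ ^ 2 = ⟪toE a, toE (P *ᵥ a)⟫ := by
  rw [← inner_P_P P hPT hPP a a, real_inner_self_eq_norm_sq]

private lemma norm_P_le (P : Matrix (Fin n) (Fin n) ℝ) (hPT : Pᵀ = P) (hPP : P * P = P)
    (a : Fin n → ℝ) : ‖toE (P *ᵥ a)‖ ≤ ‖toE a‖ := by
  rcases eq_or_lt_of_le (norm_nonneg (toE (P *ᵥ a))) with h | h
  · rw [← h]; exact norm_nonneg _
  · have h1 := norm_P_sq P hPT hPP a
    have h2 : ⟪toE a, toE (P *ᵥ a)⟫ ≤ ‖toE a‖ * ‖toE (P *ᵥ a)‖ := real_inner_le_norm _ _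
    nlinarith

private lemma P_eq_of_norm_eq (P : Matrix (Fin n) (Fin n) ℝ) (hPT : Pᵀ = P) (hPP : P * P = P)
    (a : Fin n → ℝ) (h : ‖toE (P *ᵥ a)‖ = ‖toE a‖) : P *ᵥ a = a := by
  have h1 : ‖toE a - toE (P *ᵥ a)‖ ^ 2 =
      ‖toE a‖ ^ 2 - 2 * ⟪toE a, toE (P *ᵥ a)⟫ + ‖toE (P *ᵥ a)‖ ^ 2 := by
    rw [@norm_sub_sq_real]
  rw [← norm_P_sq P hPT hPP] at h1
  rw [h] at h1
  have h2 : ‖toE a - toE (P *ᵥ a)‖ ^ 2 = 0 := by rw [h1]; ring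
  have h3 : toE a - toE (P *ᵥ a) = 0 := by
    simpa using pow_eq_zero_iff (n := 2) (by norm_num) |>.mp h2
  have := sub_eq_zero.mp h3
  exact congrArg WithLp.ofLp this.symm

private lemma supnorm_le_enorm (y : Fin n → ℝ) : ‖y‖ ≤ ‖toE y‖ := by
  apply (pi_norm_le_iff_of_nonneg (norm_nonneg (toE y))).mpr
  intro i
  have h1 : ‖toE y‖ ^ 2 = ∑ j, ‖toE y j‖ ^ 2 := by rw [PiLp.norm_sq_eq_of_L2]
  have h2 : ‖toE y i‖ ^ 2 ≤ ∑ j, ‖toE y j‖ ^ 2 :=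
    Finset.single_le_sum (f := fun j => ‖toE y j‖ ^ 2) (fun j _ => sq_nonneg _)
      (Finset.mem_univ i)
  have h3 : ‖y i‖ = ‖toE y i‖ := rfl
  rw [h3]
  nlinarith [norm_nonneg (toE y), norm_nonneg (toE y i)]

end Aux2

section Aux3

variable {m n : ℕ} [NeZero m]

open Fin.NatCast

private def Smap (P : Fin m → Matrix (Fin n) (Fin n) ℝ) : Hs m n →ₗ[ℝ] Hs m n where
  toFun u := WithLp.toLp 2 (fun i => toE (P i *ᵥ (u (i - 1))))
  map_add' u v := by
    apply WithLp.ofLp_injective 2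
    funext i
    show toE (P i *ᵥ (u (i-1) + v (i-1))) = _
    rw [Matrix.mulVec_add]; rfl
  map_smul' c u := by
    apply WithLp.ofLp_injective 2
    funext i
    show toE (P i *ᵥ (c • u (i-1))) = _
    rw [Matrix.mulVec_smul]; rfl

private lemma Smap_apply (P : Fin m → Matrix (Fin n) (Fin n) ℝ) (u : Hs m n) (i : Fin m) :
    Smap P u i = toE (P i *ᵥ (u (i - 1) : Fin n → ℝ)) := rfl

private def Usub (P : Fin m → Matrix (Fin n) (Fin n) ℝ) : Submodule ℝ (Hs m n) where
  carrier := {v | ∀ i, P i *ᵥ (v i : Fin n → ℝ) = v i}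
  add_mem' := by
    intro a b ha hb i
    show P i *ᵥ (a i + b i) = a i + b i
    rw [Matrix.mulVec_add, ha i, hb i]
  zero_mem' := by
    intro i
    show P i *ᵥ (0 : Fin n → ℝ) = 0
    rw [Matrix.mulVec_zero]
  smul_mem' := by
    intro c a ha i
    show P i *ᵥ (c • a i) = c • a i
    rw [Matrix.mulVec_smul, ha i]

private lemma mem_Usub {P : Fin m → Matrix (Fin n) (Fin n) ℝ} {v : Hs m n} :
    v ∈ Usub P ↔ ∀ i, P i *ᵥ (v i : Fin n → ℝ) = v i := Iff.rfl

private lemma normH_sq (u : Hs m n) : ‖u‖ ^ 2 = ∑ i, ‖u i‖ ^ 2 := by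
  rw [PiLp.norm_sq_eq_of_L2]

private lemma norm_apply_le (u : Hs m n) (i : Fin m) : ‖u i‖ ≤ ‖u‖ := by
  have h1 := normH_sq u
  have h2 : ‖u i‖ ^ 2 ≤ ∑ j, ‖u j‖ ^ 2 :=
    Finset.single_le_sum (f := fun j => ‖u j‖ ^ 2) (fun j _ => sq_nonneg _) (Finset.mem_univ i)
  nlinarith [norm_nonneg u, norm_nonneg (u i)]

private lemma norm_S_le (P : Fin m → Matrix (Fin n) (Fin n) ℝ)
    (hle : ∀ (i : Fin m) (a : Fin n → ℝ), ‖toE (P i *ᵥ a)‖ ≤ ‖toE a‖)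
    (u : Hs m n) : ‖Smap P u‖ ≤ ‖u‖ := by
  have h1 : ‖Smap P u‖ ^ 2 ≤ ‖u‖ ^ 2 := by
    rw [normH_sq, normH_sq]
    have h2 : ∀ i : Fin m, ‖(Smap P u) i‖ ^ 2 ≤ ‖u (i - 1)‖ ^ 2 := by
      intro i
      have h3 := hle i (u (i - 1))
      have e1 : ‖(Smap P) u i‖ = ‖toE (P i *ᵥ u (i-1))‖ := rfl
      have e2 : ‖toE (u (i-1))‖ = ‖u (i-1)‖ := rfl
      rw [e1, ← e2]
      exact pow_le_pow_left₀ (norm_nonneg _) h3 2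
    calc ∑ i, ‖(Smap P u) i‖ ^ 2 ≤ ∑ i, ‖u (i - 1)‖ ^ 2 :=
          Finset.sum_le_sum fun i _ => h2 i
      _ = ∑ i, ‖u i‖ ^ 2 := Equiv.sum_comp (Equiv.subRight (1 : Fin m)) (fun j => ‖u j‖ ^ 2)
  nlinarith [norm_nonneg u, norm_nonneg (Smap P u)]

private lemma cyclic_le (g : Fin m → ℝ) (h : ∀ i, g i ≤ g (i - 1)) : ∀ i j, g i ≤ g j := by
  have key : ∀ (t : ℕ) (i : Fin m), g i ≤ g (i - (t : Fin m)) := by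
    intro t
    induction t with
    | zero => intro i; simp
    | succ t ih =>
      intro i
      calc g i ≤ g (i - (t : Fin m)) := ih i
        _ ≤ g (i - (t : Fin m) - 1) := h _
        _ = g (i - ((t + 1 : ℕ) : Fin m)) := by push_cast; rw [sub_sub]
  intro i j
  have := key (i - j).val i
  rwa [Fin.cast_val_eq_self, sub_sub_cancel] at this

private lemma cyclic_eq {α : Type*} (f : Fin m → α) (h : ∀ i, f i = f (i - 1)) :
    ∀ i j, f i = f j := by
  have key : ∀ (t : ℕ) (i : Fin m), f i = f (i - (t : Fin m)) := by
    intro t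
    induction t with
    | zero => intro i; simp
    | succ t ih =>
      intro i
      calc f i = f (i - (t : Fin m)) := ih i
        _ = f (i - (t : Fin m) - 1) := h _
        _ = f (i - ((t + 1 : ℕ) : Fin m)) := by push_cast; rw [sub_sub]
  intro i j
  have := key (i - j).val i
  rwa [Fin.cast_val_eq_self, sub_sub_cancel] at this

private lemma fix_char (P : Fin m → Matrix (Fin n) (Fin n) ℝ)
    (hPT : ∀ i, (P i)ᵀ = P i) (hPP : ∀ i, P i * P i = P i)
    (f : Hs m n) (hf : ∀ i, f i = toE (P i *ᵥ (f (i-1) : Fin n → ℝ))) :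
    (∀ i j, f i = f j) ∧ (∀ i, P i *ᵥ (f i : Fin n → ℝ) = f i) := by
  have hle : ∀ i, ‖f i‖ ≤ ‖f (i - 1)‖ := by
    intro i
    rw [hf i]
    exact norm_P_le (P i) (hPT i) (hPP i) (f (i-1))
  have hcyc := cyclic_le (fun i => ‖f i‖) hle
  have heq : ∀ i, ‖f i‖ = ‖f (i - 1)‖ := fun i => le_antisymm (hcyc i (i-1)) (hcyc (i-1) i)
  have hPf : ∀ i, P i *ᵥ (f (i-1) : Fin n → ℝ) = f (i-1) := by
    intro i
    apply P_eq_of_norm_eq (P i) (hPT i) (hPP i)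
    rw [show ‖toE (P i *ᵥ (f (i-1) : Fin n → ℝ))‖ = ‖f i‖ from by rw [hf i], heq i]
    rfl
  have hstep : ∀ i, f i = f (i - 1) := by
    intro i
    rw [hf i, hPf i]
    rfl
  refine ⟨cyclic_eq f hstep, fun i => ?_⟩
  have h1 : (f i : Fin n → ℝ) = f (i-1) := congrArg WithLp.ofLp (hstep i)
  rw [h1, hPf i]

private lemma step_contract (P : Fin m → Matrix (Fin n) (Fin n) ℝ)
    (hle : ∀ (i : Fin m) (a : Fin n → ℝ), ‖toE (P i *ᵥ a)‖ ≤ ‖toE a‖)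
    (e : Hs m n) (κ : ℝ) (hκ : 0 < κ) (hb : ‖e‖ ≤ κ * ‖e - Smap P e‖) :
    ‖(1/2 : ℝ) • (e + Smap P e)‖ ≤ Real.sqrt (max (1 - 1/(4*κ^2)) 0) * ‖e‖ := by
  set ρ := Real.sqrt (max (1 - 1/(4*κ^2)) 0) with hρ
  have hρ0 : 0 ≤ ρ := Real.sqrt_nonneg _
  have hρsq : ρ^2 = max (1 - 1/(4*κ^2)) 0 := Real.sq_sqrt (le_max_right _ _)
  have hmax : 1 - 1/(4*κ^2) ≤ ρ^2 := hρsq ▸ le_max_left _ _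
  have hpar := parallelogram_law_with_norm ℝ e (Smap P e)
  have hS : ‖Smap P e‖ ≤ ‖e‖ := norm_S_le P hle e
  have hsmul : ‖(1/2 : ℝ) • (e + Smap P e)‖ = (1/2) * ‖e + Smap P e‖ := by
    rw [norm_smul]; norm_num
  have hκ2 : (0:ℝ) < 4 * κ^2 := by positivity
  have hbsq : ‖e‖^2 ≤ κ^2 * ‖e - Smap P e‖^2 := by
    nlinarith [norm_nonneg e, norm_nonneg (e - Smap P e)]
  have hkey : ((1/2) * ‖e + Smap P e‖)^2 ≤ (ρ * ‖e‖)^2 := by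
    have h1 : ((1/2) * ‖e + Smap P e‖)^2 ≤ ‖e‖^2 - (1/4) * ‖e - Smap P e‖^2 := by
      nlinarith [norm_nonneg (e + Smap P e), norm_nonneg e, norm_nonneg (Smap P e)]
    have hinvpos : (0:ℝ) < 1/(4*κ^2) := by positivity
    have hq : 1/(4*κ^2) * κ^2 = 1/4 := by field_simp
    have h2 : ‖e‖^2 - (1/4) * ‖e - Smap P e‖^2 ≤ (1 - 1/(4*κ^2)) * ‖e‖^2 := by
      nlinarith [mul_le_mul_of_nonneg_left hbsq hinvpos.le, sq_nonneg ‖e - Smap P e‖]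
    have h3 : (1 - 1/(4*κ^2)) * ‖e‖^2 ≤ ρ^2 * ‖e‖^2 := by nlinarith [sq_nonneg ‖e‖]
    calc ((1/2) * ‖e + Smap P e‖)^2 ≤ ‖e‖^2 - (1/4) * ‖e - Smap P e‖^2 := h1
      _ ≤ (1 - 1/(4*κ^2)) * ‖e‖^2 := h2
      _ ≤ ρ^2 * ‖e‖^2 := h3
      _ = (ρ * ‖e‖)^2 := by ring
  rw [hsmul]
  have hn1 : 0 ≤ (1/2) * ‖e + Smap P e‖ := mul_nonneg (by norm_num) (norm_nonneg _)
  have hn2 : 0 ≤ ρ * ‖e‖ := mul_nonneg hρ0 (norm_nonneg _)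
  have h4 := Real.sqrt_le_sqrt hkey
  rwa [Real.sqrt_sq hn1, Real.sqrt_sq hn2] at h4

end Aux3

set_option maxHeartbeats 1000000

/-- On the directed cycle `0 → 1 → ⋯ → m-1 → 0` (`m ≥ 2`, matrix `C i` with full
row rank on the arc `(i-1, i)`, indices mod `m`), if the weighted cycle is well-configured
(local agreement implies consensus), then for every initial state the update
`x i (t+1) = x i t − (1/2) P i (x i t − x (i-1) t)`, with `Pᵢ = Cᵢᵀ(CᵢCᵢᵀ)⁻¹Cᵢ`, reaches a
consensus exponentially fast. -/
theorem stmt_15 (m n : ℕ) [NeZero m] (hm : 2 ≤ m) (k : Fin m → ℕ)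
    (C : (i : Fin m) → Matrix (Fin (k i)) (Fin n) ℝ)
    (hrank : ∀ i, (C i).rank = k i)
    (hwc : ∀ y : Fin m → (Fin n → ℝ),
      (∀ i : Fin m, (C i).mulVec (y i - y (i - 1)) = 0) → ∀ i j, y i = y j)
    (x : ℕ → Fin m → (Fin n → ℝ))
    (hupd : ∀ t (i : Fin m), x (t + 1) i = x t i -
      (1 / 2 : ℝ) • ((C i)ᵀ * (C i * (C i)ᵀ)⁻¹ * C i).mulVec (x t i - x t (i - 1))) :
    ∃ (z : Fin n → ℝ) (c ρ : ℝ), 0 ≤ c ∧ 0 ≤ ρ ∧ ρ < 1 ∧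
      ∀ (i : Fin m) (t : ℕ), ‖x t i - z‖ ≤ c * ρ ^ t := by
  classical
  set P : (i : Fin m) → Matrix (Fin n) (Fin n) ℝ :=
    fun i => (C i)ᵀ * (C i * (C i)ᵀ)⁻¹ * C i with hPdef
  have hPT : ∀ i, (P i)ᵀ = P i := fun i => PT_eq (C i)
  have hPP : ∀ i, P i * P i = P i := fun i => PP_eq (C i) (hrank i)
  have hker : ∀ i y, P i *ᵥ y = 0 → (C i) *ᵥ y = 0 :=
    fun i y h => (ker_P_iff (C i) (hrank i) y).mp h
  have hle : ∀ (i : Fin m) (a : Fin n → ℝ), ‖toE (P i *ᵥ a)‖ ≤ ‖toE a‖ :=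
    fun i a => norm_P_le (P i) (hPT i) (hPP i) a
  set S := Smap P with hSdef
  set T1 : Hs m n →ₗ[ℝ] Hs m n := LinearMap.id - S with hT1def
  have hT1app : ∀ u : Hs m n, T1 u = u - S u := fun u => by
    rw [hT1def]; simp
  set N : Submodule ℝ (Hs m n) := LinearMap.ker T1 with hNdef
  have hNfix : ∀ f : Hs m n, f ∈ N →
      (∀ i j, f i = f j) ∧ (∀ i, P i *ᵥ (f i : Fin n → ℝ) = f i) := by
    intro f hf
    have h0 : f = S f := by
      have h1 : T1 f = 0 := LinearMap.mem_ker.mp hf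
      rw [hT1app] at h1
      exact (sub_eq_zero.mp h1)
    exact fix_char P hPT hPP f (fun i => congrFun (congrArg WithLp.ofLp h0) i)
  -- basic data
  set w : Fin m → Fin n → ℝ := fun i => x 0 i - P i *ᵥ x 0 i with hwdef
  have hPw : ∀ i, P i *ᵥ w i = 0 := by
    intro i
    rw [hwdef]
    show P i *ᵥ (x 0 i - P i *ᵥ x 0 i) = 0
    rw [Matrix.mulVec_sub, Matrix.mulVec_mulVec, hPP i, sub_self]
  set u0 : Hs m n := toH (fun i => P i *ᵥ x 0 i) with hu0def
  set g2 : Hs m n := toH (fun i => P i *ᵥ w (i - 1)) with hg2def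
  have hg2U : g2 ∈ Usub P := by
    intro i
    show P i *ᵥ (P i *ᵥ w (i - 1)) = P i *ᵥ w (i - 1)
    rw [Matrix.mulVec_mulVec, hPP i]
  have hg2orth : g2 ∈ Nᗮ := by
    rw [Submodule.mem_orthogonal]
    intro f hf
    obtain ⟨hconst, hfP⟩ := hNfix f hf
    rw [PiLp.inner_apply]
    apply Finset.sum_eq_zero
    intro i _
    have e1 : ⟪f i, g2 i⟫ = ⟪toE (P i *ᵥ (f i : Fin n → ℝ)), toE (w (i-1))⟫ := by
      show ⟪toE (f i), toE (P i *ᵥ w (i-1))⟫ = _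
      rw [inner_P_right (P i) (hPT i)]
    rw [e1, hfP i]
    have e2 : (f i : Fin n → ℝ) = f (i-1) := congrArg WithLp.ofLp (hconst i (i-1))
    rw [show toE (f i : Fin n → ℝ) = toE (f (i-1) : Fin n → ℝ) from congrArg toE e2,
      ← hfP (i-1), ← inner_P_right (P (i-1)) (hPT (i-1)), hPw (i-1)]
    have : toE (0 : Fin n → ℝ) = (0 : EuclideanSpace ℝ (Fin n)) := rfl
    rw [this, inner_zero_right]
  have hSorth : ∀ v ∈ Nᗮ, S v ∈ Nᗮ := by
    intro v hv
    rw [Submodule.mem_orthogonal]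
    intro f hf
    obtain ⟨hconst, hfP⟩ := hNfix f hf
    rw [PiLp.inner_apply]
    have hterm : ∀ i, ⟪f i, (S v) i⟫ = ⟪f (i-1), v (i-1)⟫ := by
      intro i
      show ⟪toE (f i : Fin n → ℝ), toE (P i *ᵥ (v (i-1) : Fin n → ℝ))⟫ = _
      rw [inner_P_right (P i) (hPT i), hfP i]
      rw [show toE (f i : Fin n → ℝ) = toE (f (i-1) : Fin n → ℝ) from
        congrArg toE (congrArg WithLp.ofLp (hconst i (i-1)) : (f i : Fin n → ℝ) = f (i-1))]
      rfl
    calc ∑ i, ⟪f i, (S v) i⟫ = ∑ i, ⟪f (i-1), v (i-1)⟫ :=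
          Finset.sum_congr rfl (fun i _ => hterm i)
      _ = ∑ i, ⟪f i, v i⟫ :=
          Fintype.sum_equiv (Equiv.subRight (1 : Fin m)) _ _ (fun i => rfl)
      _ = ⟪f, v⟫ := (PiLp.inner_apply f v).symm
      _ = 0 := (Submodule.mem_orthogonal N v).mp hv f hf
  have hSU : ∀ v ∈ Usub P, S v ∈ Usub P := by
    intro v hv i
    show P i *ᵥ (P i *ᵥ (v (i-1) : Fin n → ℝ)) = P i *ᵥ (v (i-1) : Fin n → ℝ)
    rw [Matrix.mulVec_mulVec, hPP i]
  set M : Submodule ℝ (Hs m n) := Usub P ⊓ Nᗮ with hMdef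
  have hT1M : ∀ v ∈ M, T1 v ∈ M := by
    intro v hv
    obtain ⟨hvU, hvO⟩ := hv
    constructor
    · rw [hT1app]
      exact Submodule.sub_mem _ hvU (hSU v hvU)
    · rw [hT1app]
      exact Submodule.sub_mem _ hvO (hSorth v hvO)
  set f' : M →ₗ[ℝ] M := T1.restrict hT1M with hf'def
  have hker_f' : LinearMap.ker f' = ⊥ := by
    rw [LinearMap.ker_eq_bot']
    intro q hq
    have h1 : T1 q.1 = 0 := by
      have := congrArg Subtype.val hq
      rwa [LinearMap.restrict_coe_apply] at this
    have h2 : q.1 ∈ N := LinearMap.mem_ker.mpr h1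
    have h3 : q.1 ∈ Nᗮ := q.2.2
    have h4 : q.1 = 0 := by
      have := Submodule.orthogonal_disjoint N
      exact (Submodule.disjoint_def.mp this) q.1 h2 h3
    exact Subtype.ext h4
  have hinj : Function.Injective f' := LinearMap.ker_eq_bot.mp hker_f'
  have hsurj : Function.Surjective f' := (LinearMap.injective_iff_surjective).mp hinj
  obtain ⟨v', hv'⟩ := hsurj ⟨g2, hg2U, hg2orth⟩
  have hv'T1 : T1 v'.1 = g2 := by
    have := congrArg Subtype.val hv'
    rwa [LinearMap.restrict_coe_apply] at this
  set n0 : Hs m n := (Submodule.orthogonalProjectionOnto N u0 : Hs m n) with hn0def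
  have hn0N : n0 ∈ N := (Submodule.orthogonalProjectionOnto N u0).2
  obtain ⟨hn0const, hn0P⟩ := hNfix n0 hn0N
  set v : Hs m n := n0 + v'.1 with hvdef
  have hvT1 : T1 v = g2 := by
    rw [hvdef, map_add, LinearMap.mem_ker.mp hn0N, zero_add, hv'T1]
  have hvU : v ∈ Usub P := Submodule.add_mem _ (fun i => hn0P i) v'.2.1
  set e0 : Hs m n := u0 - v with he0def
  have hu0U : u0 ∈ Usub P := by
    intro i
    show P i *ᵥ (P i *ᵥ x 0 i) = P i *ᵥ x 0 i
    rw [Matrix.mulVec_mulVec, hPP i]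
  have he0U : e0 ∈ Usub P := Submodule.sub_mem _ hu0U hvU
  have he0orth : e0 ∈ Nᗮ := by
    have h1 : u0 - n0 ∈ Nᗮ := N.sub_starProjection_mem_orthogonal u0
    have h2 := Submodule.sub_mem _ h1 v'.2.2
    have h3 : u0 - n0 - v'.1 = e0 := by rw [he0def, hvdef, sub_sub]
    rwa [h3] at h2
  -- consensus point
  set xbar : Fin m → Fin n → ℝ := fun i => w i + unE (v i) with hxbardef
  have hvrec : ∀ i, unE (v i) - P i *ᵥ unE (v (i-1)) = P i *ᵥ w (i-1) := by
    intro i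
    have hvv : v - S v = g2 := by rw [← hT1app]; exact hvT1
    exact congrArg WithLp.ofLp (congrFun (congrArg WithLp.ofLp hvv) i)
  have hfixpt : ∀ i, P i *ᵥ (xbar i - xbar (i - 1)) = 0 := by
    intro i
    show P i *ᵥ ((w i + unE (v i)) - (w (i-1) + unE (v (i-1)))) = 0
    have hvUi : P i *ᵥ unE (v i) = unE (v i) := hvU i
    rw [Matrix.mulVec_sub, Matrix.mulVec_add, Matrix.mulVec_add, hPw i, hvUi]
    rw [zero_add]
    have h6 : unE (v i) - (P i *ᵥ w (i-1) + P i *ᵥ unE (v (i-1))) =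
        (unE (v i) - P i *ᵥ unE (v (i-1))) - P i *ᵥ w (i-1) := by abel
    rw [h6, hvrec i, sub_self]
  have hcons : ∀ i j, xbar i = xbar j := hwc xbar (fun i => hker i _ (hfixpt i))
  set z : Fin n → ℝ := xbar 0 with hzdef
  -- error sequence
  set ev : ℕ → Hs m n := fun t => toH (fun i => x t i - xbar i) with hevdef
  have hev0 : ev 0 = e0 := by
    apply WithLp.ofLp_injective 2
    funext i
    show toE (x 0 i - xbar i) = (u0 - v) i
    show toE (x 0 i - (w i + unE (v i))) = toE (P i *ᵥ x 0 i) - v i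
    have h1 : x 0 i - (w i + unE (v i)) = (P i *ᵥ x 0 i) - unE (v i) := by
      rw [hwdef]
      show x 0 i - ((x 0 i - P i *ᵥ x 0 i) + unE (v i)) = _
      abel
    rw [congrArg toE h1]
    rfl
  -- antilipschitz constant
  obtain ⟨K, hK0, hKanti⟩ := LinearMap.exists_antilipschitzWith f' hker_f'
  set κ : ℝ := (K : ℝ) with hκdef
  have hκpos : (0:ℝ) < κ := hK0
  have hbound : ∀ e : Hs m n, e ∈ M → ‖e‖ ≤ κ * ‖e - S e‖ := by
    intro e he
    have h1 := hKanti.le_mul_dist (⟨e, he⟩ : M) 0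
    rw [map_zero] at h1
    rw [dist_zero_right, dist_zero_right] at h1
    have h2 : ‖(⟨e, he⟩ : M)‖ = ‖e‖ := rfl
    have h3 : ‖f' (⟨e, he⟩ : M)‖ = ‖T1 e‖ := by
      have : (f' (⟨e, he⟩ : M) : Hs m n) = T1 e := LinearMap.restrict_coe_apply _ _ _
      rw [← this]
      rfl
    rw [h2, h3, hT1app] at h1
    exact h1
  set ρ : ℝ := Real.sqrt (max (1 - 1/(4*κ^2)) 0) with hρdef
  have hρ0 : 0 ≤ ρ := Real.sqrt_nonneg _
  have hρ1 : ρ < 1 := by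
    have h1 : max (1 - 1/(4*κ^2)) 0 < 1 := by
      apply max_lt
      · have : (0:ℝ) < 1/(4*κ^2) := by positivity
        linarith
      · norm_num
    have h2 : ρ^2 = max (1 - 1/(4*κ^2)) 0 := Real.sq_sqrt (le_max_right _ _)
    nlinarith
  -- induction
  have hmain : ∀ t : ℕ, ev t ∈ M ∧ ‖ev t‖ ≤ ρ ^ t * ‖ev 0‖ := by
    intro t
    induction t with
    | zero =>
      refine ⟨?_, by simp⟩
      rw [hev0]
      exact ⟨he0U, he0orth⟩
    | succ t ih =>
      obtain ⟨⟨htU, htO⟩, hnorm⟩ := ih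
      have hrec : ev (t+1) = (1/2 : ℝ) • (ev t + S (ev t)) := by
        apply WithLp.ofLp_injective 2
        funext i
        show toE (x (t+1) i - xbar i) =
          toE ((1/2 : ℝ) • ((x t i - xbar i) + P i *ᵥ ((x t (i-1) - xbar (i-1)) : Fin n → ℝ)))
        rw [hupd t i]
        apply congrArg toE
        have hA : P i *ᵥ (x t i - xbar i) = x t i - xbar i := htU i
        have hB := hfixpt i
        have hl : P i *ᵥ (x t i - x t (i-1)) =
            (x t i - xbar i) - P i *ᵥ (x t (i-1) - xbar (i-1)) := by
          have hsplit : x t i - x t (i-1) =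
              ((x t i - xbar i) - (x t (i-1) - xbar (i-1))) + (xbar i - xbar (i-1)) := by abel
          rw [hsplit, Matrix.mulVec_add, Matrix.mulVec_sub, hA, hB, add_zero]
        rw [hl]
        module
      refine ⟨?_, ?_⟩
      · rw [hrec]
        exact Submodule.smul_mem _ _ (Submodule.add_mem _ ⟨htU, htO⟩
          ⟨hSU _ htU, hSorth _ htO⟩)
      · have hstep := step_contract P hle (ev t) κ hκpos (hbound _ ⟨htU, htO⟩)
        rw [← hρdef] at hstep
        calc ‖ev (t+1)‖ = ‖(1/2:ℝ) • (ev t + S (ev t))‖ := by rw [hrec]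
          _ ≤ ρ * ‖ev t‖ := hstep
          _ ≤ ρ * (ρ^t * ‖ev 0‖) := mul_le_mul_of_nonneg_left hnorm hρ0
          _ = ρ^(t+1) * ‖ev 0‖ := by ring
  refine ⟨z, ‖ev 0‖, ρ, norm_nonneg _, hρ0, hρ1, ?_⟩
  intro i t
  have h1 : x t i - z = x t i - xbar i := by
    rw [hzdef, hcons 0 i]
  calc ‖x t i - z‖ ≤ ‖toE (x t i - z)‖ := supnorm_le_enorm _
    _ = ‖ev t i‖ := by rw [h1]; rfl
    _ ≤ ‖ev t‖ := norm_apply_le (ev t) i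
    _ ≤ ρ^t * ‖ev 0‖ := (hmain t).2
    _ = ‖ev 0‖ * ρ^t := by ring
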